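/- Let a graph inverse semigroup G(E) be a dense subsemigroup of a Hausdorff CLP-compact topological semigroup S. Then for every vertex f ∈ E⁰ through which no cycle passes, the set I_f = {u ∈ Path(E) : r(u) = f} is finite; moreover, the set {uv⁻¹ ∈ G(E) : no cycle passes through r(u)} ∪ {0} is a compact subset of S. -/

import Mathlib

/-! Preamble: graph inverse semigroups and compactness-type properties. -/

namespace GISPaper

variable {V E : Type*}

/-- `IsPathFrom src rng v l` means that the list of edges `l` is composable
and starts at the vertex `v`. -/
def IsPathFrom (src rng : E → V) : V → List E → Prop
  | _, [] => True
  | v, e :: l => src e = v ∧ IsPathFrom src rng (rng e) l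

/-- The end vertex of a list of edges starting at the vertex `v`. -/
def pathEnd (rng : E → V) : V → List E → V
  | v, [] => v
  | _, e :: l => pathEnd rng (rng e) l

theorem pathEnd_append (rng : E → V) (v : V) (l₁ l₂ : List E) :
    pathEnd rng v (l₁ ++ l₂) = pathEnd rng (pathEnd rng v l₁) l₂ := by
  induction l₁ generalizing v with
  | nil => rfl
  | cons e l ih => simpa [pathEnd] using ih (rng e)

theorem isPathFrom_append (src rng : E → V) (v : V) (l₁ l₂ : List E) :
    IsPathFrom src rng v (l₁ ++ l₂) ↔
      IsPathFrom src rng v l₁ ∧ IsPathFrom src rng (pathEnd rng v l₁) l₂ := by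
  induction l₁ generalizing v with
  | nil => simp [IsPathFrom, pathEnd]
  | cons e l ih => simp [IsPathFrom, pathEnd, ih (rng e), and_assoc]

/-- A (directed) path in the graph `(V, E, src, rng)`: a starting vertex together
with a composable list of edges (a path of length zero is just a vertex). -/
structure GPath (src rng : E → V) where
  start : V
  edges : List E
  isPath : IsPathFrom src rng start edges

/-- The range (end vertex) of a path. -/
def GPath.range {src rng : E → V} (p : GPath src rng) : V :=
  pathEnd rng p.start p.edges

/-- The nonzero elements of the graph inverse semigroup: pairs `u v⁻¹` of paths
with `r u = r v`. -/
def GISElem (src rng : E → V) : Type _ :=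
  {p : GPath src rng × GPath src rng // p.1.range = p.2.range}

/-- The graph inverse semigroup over the graph `(V, E, src, rng)`: the nonzero
elements `u v⁻¹` together with a zero element (represented by `none`). -/
def GIS (src rng : E → V) : Type _ := Option (GISElem src rng)

instance {src rng : E → V} : Zero (GIS src rng) :=
  ⟨(none : Option (GISElem src rng))⟩

open Classical in
/-- The multiplication of a graph inverse semigroup:
`u₁v₁⁻¹ · u₂v₂⁻¹ = u₁w v₂⁻¹` if `u₂ = v₁ w`, `u₁v₁⁻¹ · u₂v₂⁻¹ = u₁ (v₂ w)⁻¹` if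
`v₁ = u₂ w`, and `0` otherwise; `0` is absorbing. -/
noncomputable def GIS.mul {src rng : E → V} :
    Option (GISElem src rng) → Option (GISElem src rng) → Option (GISElem src rng)
  | some ⟨(u₁, v₁), h₁⟩, some ⟨(u₂, v₂), h₂⟩ =>
    if h : v₁.start = u₂.start ∧ v₁.edges <+: u₂.edges then
      some ⟨(⟨u₁.start, u₁.edges ++ u₂.edges.drop v₁.edges.length, by
        obtain ⟨hs, t, ht⟩ := h
        have hdrop : u₂.edges.drop v₁.edges.length = t := by
          rw [← ht, List.drop_left]
        have hu₂ := u₂.isPath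
        rw [← ht, isPathFrom_append] at hu₂
        rw [hdrop, isPathFrom_append]
        refine ⟨u₁.isPath, ?_⟩
        have he : pathEnd rng u₁.start u₁.edges = pathEnd rng u₂.start v₁.edges := by
          rw [← hs]; exact h₁
        rw [he]; exact hu₂.2⟩, v₂), by
        show pathEnd rng u₁.start (u₁.edges ++ u₂.edges.drop v₁.edges.length) = v₂.range
        obtain ⟨hs, t, ht⟩ := h
        have hdrop : u₂.edges.drop v₁.edges.length = t := by
          rw [← ht, List.drop_left]
        rw [hdrop, pathEnd_append]
        have he : pathEnd rng u₁.start u₁.edges = pathEnd rng u₂.start v₁.edges := by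
          rw [← hs]; exact h₁
        rw [he, ← pathEnd_append, ht]
        exact h₂⟩
    else if h' : u₂.start = v₁.start ∧ u₂.edges <+: v₁.edges then
      some ⟨(u₁, ⟨v₂.start, v₂.edges ++ v₁.edges.drop u₂.edges.length, by
        obtain ⟨hs, t, ht⟩ := h'
        have hdrop : v₁.edges.drop u₂.edges.length = t := by
          rw [← ht, List.drop_left]
        have hv₁ := v₁.isPath
        rw [← ht, isPathFrom_append] at hv₁
        rw [hdrop, isPathFrom_append]
        refine ⟨v₂.isPath, ?_⟩
        have he : pathEnd rng v₂.start v₂.edges = pathEnd rng v₁.start u₂.edges := by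
          rw [← hs]; exact h₂.symm
        rw [he]; exact hv₁.2⟩), by
        show u₁.range = pathEnd rng v₂.start (v₂.edges ++ v₁.edges.drop u₂.edges.length)
        obtain ⟨hs, t, ht⟩ := h'
        have hdrop : v₁.edges.drop u₂.edges.length = t := by
          rw [← ht, List.drop_left]
        have he : pathEnd rng v₂.start v₂.edges = pathEnd rng v₁.start u₂.edges := by
          rw [← hs]; exact h₂.symm
        rw [hdrop, pathEnd_append, he, ← pathEnd_append, ht]
        exact h₁⟩
    else none
  | _, _ => none

noncomputable instance {src rng : E → V} : Mul (GIS src rng) := ⟨GIS.mul⟩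

theorem GIS.zero_mul {src rng : E → V} (x : GIS src rng) : 0 * x = 0 := rfl

/-- The topology in which every nonzero point is isolated and the open
neighbourhoods of `0` are exactly the cofinite sets containing `0`. -/
def tauC (α : Type*) [Zero α] : TopologicalSpace α where
  IsOpen U := (0 : α) ∈ U → Uᶜ.Finite
  isOpen_univ := by simp
  isOpen_inter U W hU hW h := by
    rw [Set.compl_inter]
    exact (hU h.1).union (hW h.2)
  isOpen_sUnion 𝒮 h h0 := by
    obtain ⟨U, hU, hU0⟩ := h0
    exact (h U hU hU0).subset (Set.compl_subset_compl.mpr (Set.subset_sUnion_of_mem hU))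

/-- A topological space is CLP-compact if every cover by clopen sets has a
finite subcover. -/
def CLPCompact (X : Type*) [TopologicalSpace X] : Prop :=
  ∀ 𝒰 : Set (Set X), (∀ U ∈ 𝒰, IsClopen U) → ⋃₀ 𝒰 = Set.univ →
    ∃ ℱ ⊆ 𝒰, ℱ.Finite ∧ ⋃₀ ℱ = Set.univ

/-- A topological space is countably compact if every infinite subset has an
accumulation point. -/
def CountablyCompactSpace (X : Type*) [TopologicalSpace X] : Prop :=
  ∀ B : Set X, B.Infinite → ∃ x : X, AccPt x (Filter.principal B)

/-- A topological space is feebly compact if every locally finite family of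
nonempty open sets is finite. -/
def FeeblyCompact (X : Type*) [TopologicalSpace X] : Prop :=
  ∀ 𝒰 : Set (Set X), (∀ U ∈ 𝒰, IsOpen U ∧ U.Nonempty) →
    (∀ x : X, ∃ N ∈ nhds x, {U ∈ 𝒰 | (U ∩ N).Nonempty}.Finite) → 𝒰.Finite

/-- The multiplication of the bicyclic monoid on `ℕ × ℕ`. -/
def bicyclicMul (x y : ℕ × ℕ) : ℕ × ℕ :=
  (x.1 + y.1 - min x.2 y.1, x.2 + y.2 - min x.2 y.1)

/-- The multiplication of the semigroup of `X × X`-matrix units (with zero `none`). -/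
def matUnitsMul {X : Type*} [DecidableEq X] :
    Option (X × X) → Option (X × X) → Option (X × X)
  | some (a, b), some (c, d) => if b = c then some (a, d) else none
  | _, _ => none

/-- A cycle based at the vertex `e`: a path of nonzero length from `e` to `e`. -/
def HasCycleAt (src rng : E → V) (e : V) : Prop :=
  ∃ p : GPath src rng, p.edges ≠ [] ∧ p.start = e ∧ p.range = e

end GISPaper

namespace GISAux
open GISPaper

variable {V E : Type*} {src rng : E → V}

theorem gpath_ext {p q : GPath src rng} (h1 : p.start = q.start)
    (h2 : p.edges = q.edges) : p = q := by
  cases p; cases q; simp_all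

/-- `Ext p q` : `p` is a prefix of `q` (same start, prefix edges). -/
abbrev Ext (p q : GPath src rng) : Prop := p.start = q.start ∧ p.edges <+: q.edges

theorem ext_refl (p : GPath src rng) : Ext p p := ⟨rfl, List.prefix_refl _⟩

theorem eq_of_ext_of_len {p q : GPath src rng} (h : Ext p q)
    (hl : q.edges.length ≤ p.edges.length) : p = q := by
  refine gpath_ext h.1 ?_
  have h2 := h.2
  rw [List.prefix_iff_eq_take] at h2
  have : p.edges.length = q.edges.length :=
    le_antisymm (h.2.length_le) hl
  rw [h2, this, List.take_length]

/-- the trivial path at a vertex -/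
def vpath (src rng : E → V) (f : V) : GPath src rng := ⟨f, [], trivial⟩

@[simp] theorem vpath_start (f : V) : (vpath src rng f).start = f := rfl
@[simp] theorem vpath_edges (f : V) : (vpath src rng f).edges = [] := rfl
@[simp] theorem vpath_range (f : V) : (vpath src rng f).range = f := rfl

def vertEl (src rng : E → V) (f : V) : GISElem src rng := ⟨(vpath src rng f, vpath src rng f), rfl⟩

def colEl (u : GPath src rng) : GISElem src rng := ⟨(u, vpath src rng u.range), rfl⟩

def rowEl (u : GPath src rng) : GISElem src rng := ⟨(vpath src rng u.range, u), rfl⟩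

def diagEl (u : GPath src rng) : GISElem src rng := ⟨(u, u), rfl⟩

def oe (a : GISElem src rng) : GIS src rng := some a

theorem zero_def : (0 : GIS src rng) = none := rfl

theorem oe_inj : Function.Injective (oe (src := src) (rng := rng)) := by
  intro a b h
  exact Option.some_injective _ h

theorem oe_ne_zero (a : GISElem src rng) : oe a ≠ 0 := by
  simp [oe, zero_def]
  exact Option.some_ne_none a

theorem mul_def' (x y : GIS src rng) : x * y = GIS.mul x y := rfl

theorem gis_mul_zero (x : GIS src rng) : x * 0 = 0 := by
  cases x with
  | none => rfl
  | some a => obtain ⟨⟨u, v⟩, h⟩ := a; rfl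

/-- positive multiplication, first branch -/
theorem mul_pos₁ {a b c : GISElem src rng} (h : Ext a.1.2 b.1.1)
    (hs : c.1.1.start = a.1.1.start)
    (he : c.1.1.edges = a.1.1.edges ++ b.1.1.edges.drop a.1.2.edges.length)
    (hc2 : c.1.2 = b.1.2) :
    oe a * oe b = oe c := by
  obtain ⟨⟨u₁, v₁⟩, h₁⟩ := a
  obtain ⟨⟨u₂, v₂⟩, h₂⟩ := b
  simp only [oe, mul_def', GIS.mul]
  show GIS.mul _ _ = _
  simp only [GIS.mul]
  rw [dif_pos h]
  apply congrArg
  apply Subtype.ext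
  apply Prod.ext
  · exact gpath_ext hs.symm he.symm
  · exact hc2.symm

/-- positive multiplication, second branch -/
theorem mul_pos₂ {a b c : GISElem src rng} (h : ¬ Ext a.1.2 b.1.1) (h' : Ext b.1.1 a.1.2)
    (hc1 : c.1.1 = a.1.1)
    (hs : c.1.2.start = b.1.2.start)
    (he : c.1.2.edges = b.1.2.edges ++ a.1.2.edges.drop b.1.1.edges.length) :
    oe a * oe b = oe c := by
  obtain ⟨⟨u₁, v₁⟩, h₁⟩ := a
  obtain ⟨⟨u₂, v₂⟩, h₂⟩ := b
  simp only [oe, mul_def', GIS.mul]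
  show GIS.mul _ _ = _
  simp only [GIS.mul]
  rw [dif_neg h, dif_pos h']
  apply congrArg
  apply Subtype.ext
  apply Prod.ext
  · exact hc1.symm
  · exact gpath_ext hs.symm he.symm

theorem mul_zero_of_not_ext {a b : GISElem src rng} (h : ¬ Ext a.1.2 b.1.1)
    (h' : ¬ Ext b.1.1 a.1.2) : oe a * oe b = 0 := by
  obtain ⟨⟨u₁, v₁⟩, h₁⟩ := a
  obtain ⟨⟨u₂, v₂⟩, h₂⟩ := b
  simp only [oe, mul_def', GIS.mul]
  show GIS.mul _ _ = _
  simp only [GIS.mul]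
  rw [dif_neg h, dif_neg h']
  rfl

/-- inversion of a nonzero product -/
theorem mul_some_inv {a b c : GISElem src rng} (h : oe a * oe b = oe c) :
    (Ext a.1.2 b.1.1 ∧ c.1.1.start = a.1.1.start ∧
      c.1.1.edges = a.1.1.edges ++ b.1.1.edges.drop a.1.2.edges.length ∧ c.1.2 = b.1.2) ∨
    (¬ Ext a.1.2 b.1.1 ∧ Ext b.1.1 a.1.2 ∧ c.1.1 = a.1.1 ∧
      c.1.2.start = b.1.2.start ∧
      c.1.2.edges = b.1.2.edges ++ a.1.2.edges.drop b.1.1.edges.length) := by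
  by_cases h1 : Ext a.1.2 b.1.1
  · left
    refine ⟨h1, ?_⟩
    have := (mul_pos₁ (c := ⟨(⟨a.1.1.start,
        a.1.1.edges ++ b.1.1.edges.drop a.1.2.edges.length, ?_⟩, b.1.2), ?_⟩) h1 rfl rfl rfl).symm.trans h
    · have hc := oe_inj this
      constructor
      · rw [← hc]
      constructor
      · rw [← hc]
      · rw [← hc]
    -- path validity
    · obtain ⟨hs, t, ht⟩ := h1
      have hdrop : b.1.1.edges.drop a.1.2.edges.length = t := by
        rw [← ht, List.drop_left]
      have hb := b.1.1.isPath
      rw [← ht, isPathFrom_append] at hb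
      rw [hdrop, isPathFrom_append]
      refine ⟨a.1.1.isPath, ?_⟩
      have he : pathEnd rng a.1.1.start a.1.1.edges = pathEnd rng b.1.1.start a.1.2.edges := by
        rw [← hs]; exact a.2
      rw [he]; exact hb.2
    -- range equality
    · show pathEnd rng a.1.1.start (a.1.1.edges ++ b.1.1.edges.drop a.1.2.edges.length) = b.1.2.range
      obtain ⟨hs, t, ht⟩ := h1
      have hdrop : b.1.1.edges.drop a.1.2.edges.length = t := by
        rw [← ht, List.drop_left]
      rw [hdrop, pathEnd_append]
      have he : pathEnd rng a.1.1.start a.1.1.edges = pathEnd rng b.1.1.start a.1.2.edges := by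
        rw [← hs]; exact a.2
      rw [he, ← pathEnd_append, ht]
      exact b.2
  · by_cases h2 : Ext b.1.1 a.1.2
    · right
      refine ⟨h1, h2, ?_⟩
      have := (mul_pos₂ (c := ⟨(a.1.1, ⟨b.1.2.start,
          b.1.2.edges ++ a.1.2.edges.drop b.1.1.edges.length, ?_⟩), ?_⟩) h1 h2 rfl rfl rfl).symm.trans h
      · have hc := oe_inj this
        constructor
        · rw [← hc]
        constructor
        · rw [← hc]
        · rw [← hc]
      · obtain ⟨hs, t, ht⟩ := h2
        have hdrop : a.1.2.edges.drop b.1.1.edges.length = t := by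
          rw [← ht, List.drop_left]
        have ha := a.1.2.isPath
        rw [← ht, isPathFrom_append] at ha
        rw [hdrop, isPathFrom_append]
        refine ⟨b.1.2.isPath, ?_⟩
        have he : pathEnd rng b.1.2.start b.1.2.edges = pathEnd rng a.1.2.start b.1.1.edges := by
          rw [← hs]; exact b.2.symm
        rw [he]; exact ha.2
      · show a.1.1.range = pathEnd rng b.1.2.start (b.1.2.edges ++ a.1.2.edges.drop b.1.1.edges.length)
        obtain ⟨hs, t, ht⟩ := h2
        have hdrop : a.1.2.edges.drop b.1.1.edges.length = t := by
          rw [← ht, List.drop_left]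
        have he : pathEnd rng b.1.2.start b.1.2.edges = pathEnd rng a.1.2.start b.1.1.edges := by
          rw [← hs]; exact b.2.symm
        rw [hdrop, pathEnd_append, he, ← pathEnd_append, ht]
        exact a.2
    · exact absurd (h.symm.trans (mul_zero_of_not_ext h1 h2)) (oe_ne_zero c)

theorem elem_ext {a b : GISElem src rng} (h1 : a.1.1 = b.1.1) (h2 : a.1.2 = b.1.2) :
    a = b := Subtype.ext (Prod.ext h1 h2)

/-! ### computation pack -/

theorem vert_mul {f : V} {a : GISElem src rng} (h : a.1.1.start = f) :
    oe (vertEl src rng f) * oe a = oe a := by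
  refine mul_pos₁ ⟨h.symm, List.nil_prefix⟩ h ?_ rfl
  simp [vertEl, vpath]

theorem vert_mul_eq_zero {f : V} {a : GISElem src rng} (h : a.1.1.start ≠ f) :
    oe (vertEl src rng f) * oe a = 0 := by
  refine mul_zero_of_not_ext (fun hc => h hc.1.symm) (fun hc => h hc.1)

theorem mul_vert {f : V} {a : GISElem src rng} (h : a.1.2.start = f) :
    oe a * oe (vertEl src rng f) = oe a := by
  by_cases hc : Ext a.1.2 ((vertEl src rng f).1.1)
  · have hnil : a.1.2.edges = [] := List.prefix_nil.mp hc.2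
    refine mul_pos₁ hc rfl ?_ ?_
    · simp [vertEl, vpath, hnil]
    · exact gpath_ext h hnil
  · refine mul_pos₂ hc ⟨h.symm, List.nil_prefix⟩ rfl h ?_
    simp [vertEl, vpath]

theorem mul_vert_eq_zero {f : V} {a : GISElem src rng} (h : a.1.2.start ≠ f) :
    oe a * oe (vertEl src rng f) = 0 := by
  refine mul_zero_of_not_ext (fun hc => h hc.1) (fun hc => h hc.1.symm)

theorem vert_mul_vert (f : V) :
    oe (vertEl src rng f) * oe (vertEl src rng f) = oe (vertEl src rng f) :=
  vert_mul rfl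

theorem vert_mul_vert_zero {f g : V} (h : f ≠ g) :
    oe (vertEl src rng f) * oe (vertEl src rng g) = 0 :=
  vert_mul_eq_zero (fun hc => h hc.symm)

theorem row_mul_col (u : GPath src rng) :
    oe (rowEl u) * oe (colEl u) = oe (vertEl src rng u.range) := by
  refine mul_pos₁ (ext_refl u) rfl ?_ rfl
  simp [rowEl, colEl, vertEl, vpath, List.drop_length]

theorem diag_mul_col (u : GPath src rng) :
    oe (diagEl u) * oe (colEl u) = oe (colEl u) := by
  refine mul_pos₁ (ext_refl u) rfl ?_ rfl
  simp [diagEl, colEl, List.drop_length]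

theorem row_mul_diag (u : GPath src rng) :
    oe (rowEl u) * oe (diagEl u) = oe (rowEl u) := by
  refine mul_pos₁ (ext_refl u) rfl ?_ rfl
  simp [rowEl, diagEl, vpath, List.drop_length]

theorem col_mul_row {u v : GPath src rng} (h : u.range = v.range) :
    oe (colEl u) * oe (rowEl v) = oe (⟨(u, v), h⟩ : GISElem src rng) := by
  refine mul_pos₁ ⟨h, List.nil_prefix⟩ rfl ?_ rfl
  simp [colEl, rowEl, vpath]

theorem col_mul_vert (u : GPath src rng) :
    oe (colEl u) * oe (vertEl src rng u.range) = oe (colEl u) :=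
  mul_vert rfl

theorem vert_mul_row (u : GPath src rng) :
    oe (vertEl src rng u.range) * oe (rowEl u) = oe (rowEl u) :=
  vert_mul rfl

theorem diag_mul_diag (u : GPath src rng) :
    oe (diagEl u) * oe (diagEl u) = oe (diagEl u) := by
  refine mul_pos₁ (ext_refl u) rfl ?_ rfl
  simp [diagEl, List.drop_length]

/-! ### cycle-freeness -/

theorem trivial_of_loop {f : V} (hf : ¬ HasCycleAt src rng f) {p : GPath src rng}
    (h1 : p.start = f) (h2 : p.range = f) : p.edges = [] := by
  by_contra h
  exact hf ⟨p, h, h1, h2⟩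

theorem eq_vpath_of_loop {f : V} (hf : ¬ HasCycleAt src rng f) {p : GPath src rng}
    (h1 : p.start = f) (h2 : p.range = f) : p = vpath src rng f :=
  gpath_ext h1 (trivial_of_loop hf h1 h2)

theorem not_ext_of_ne {f : V} (hf : ¬ HasCycleAt src rng f) {u u' : GPath src rng}
    (hu : u.range = f) (hu' : u'.range = f) (hne : u ≠ u') : ¬ Ext u u' := by
  rintro ⟨hs, t, ht⟩
  have hsplit := u'.isPath
  rw [← ht, isPathFrom_append] at hsplit
  have hpe : pathEnd rng u'.start u.edges = f := by
    rw [← hs]; exact hu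
  have htp : IsPathFrom src rng f t := by
    rw [← hpe]; exact hsplit.2
  have htr : pathEnd rng f t = f := by
    have := hu'
    rw [GPath.range, ← ht, pathEnd_append, hpe] at this
    exact this
  have hnil : t = [] :=
    trivial_of_loop hf (p := ⟨f, t, htp⟩) rfl htr
  apply hne
  refine gpath_ext hs ?_
  rw [← ht, hnil, List.append_nil]

theorem diag_mul_diag_zero {f : V} (hf : ¬ HasCycleAt src rng f) {u u' : GPath src rng}
    (hu : u.range = f) (hu' : u'.range = f) (hne : u ≠ u') :
    oe (diagEl u) * oe (diagEl u') = 0 :=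
  mul_zero_of_not_ext (not_ext_of_ne hf hu hu' hne)
    (not_ext_of_ne hf hu' hu (Ne.symm hne))

/-! ### solution (uniqueness) lemmas -/

theorem sol_col {u : GPath src rng} {h : GISElem src rng}
    (heq : oe (rowEl u) * oe h = oe (vertEl src rng u.range)) : h = colEl u := by
  rcases mul_some_inv heq with ⟨⟨hs, hpre⟩, _, he', hc2⟩ | ⟨hn, hext, _, _, he'⟩
  · -- first branch
    have hdrop : h.1.1.edges.drop u.edges.length = [] := by
      have : (vertEl src rng u.range).1.1.edges = [] := rfl
      rw [this] at he'
      exact (List.append_eq_nil_iff.mp he'.symm).2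
    have hlen : h.1.1.edges.length ≤ u.edges.length := List.drop_eq_nil_iff.mp hdrop
    have h11 : u = h.1.1 := eq_of_ext_of_len ⟨hs, hpre⟩ hlen
    exact elem_ext h11.symm hc2.symm
  · -- second branch impossible
    exfalso
    have hdrop : u.edges.drop h.1.1.edges.length = [] := by
      have : (vertEl src rng u.range).1.2.edges = [] := rfl
      rw [this] at he'
      exact (List.append_eq_nil_iff.mp he'.symm).2
    have hlen : u.edges.length ≤ h.1.1.edges.length := List.drop_eq_nil_iff.mp hdrop
    have h11 : h.1.1 = u := eq_of_ext_of_len hext hlen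
    exact hn (h11 ▸ ext_refl u)

theorem sol_row {u : GPath src rng} {h : GISElem src rng}
    (heq : oe h * oe (colEl u) = oe (vertEl src rng u.range)) : h = rowEl u := by
  rcases mul_some_inv heq with ⟨hext, hs', he', hc2⟩ | ⟨hn, hext, _, _, he'⟩
  · -- hext : Ext h.1.2 u
    have hnil : h.1.1.edges = [] ∧ u.edges.drop h.1.2.edges.length = [] := by
      have : (vertEl src rng u.range).1.1.edges = [] := rfl
      rw [this] at he'
      exact List.append_eq_nil_iff.mp he'.symm
    have hlen : u.edges.length ≤ h.1.2.edges.length := List.drop_eq_nil_iff.mp hnil.2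
    have h12 : h.1.2 = u := eq_of_ext_of_len hext hlen
    refine elem_ext ?_ h12
    refine gpath_ext ?_ hnil.1
    exact hs'.symm
  · -- hext : Ext u h.1.2 ; impossible
    exfalso
    have hdrop : h.1.2.edges.drop u.edges.length = [] := by
      have hv : (vertEl src rng u.range).1.2.edges = [] := rfl
      have hcol : (colEl u).1.2.edges = [] := rfl
      rw [hv, hcol] at he'
      exact (List.append_eq_nil_iff.mp he'.symm).2
    have hlen : h.1.2.edges.length ≤ u.edges.length := List.drop_eq_nil_iff.mp hdrop
    have h12 : u = h.1.2 := eq_of_ext_of_len hext hlen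
    exact hn (h12 ▸ ext_refl u)

theorem sol_diag {u : GPath src rng} {h : GISElem src rng}
    (heq : oe h * oe (colEl u) = oe (colEl u)) :
    h.1.2 = h.1.1 ∧ Ext h.1.1 u := by
  rcases mul_some_inv heq with ⟨hext, hs', he', _⟩ | ⟨hn, hext, _, _, he'⟩
  · -- hext : Ext h.1.2 u; he' : u.edges = h.1.1.edges ++ u.edges.drop h.1.2.edges.length
    have hpre1 : h.1.1.edges <+: u.edges := ⟨_, he'.symm⟩
    have hlen : h.1.1.edges.length = h.1.2.edges.length := by
      have hle : h.1.2.edges.length ≤ u.edges.length := hext.2.length_le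
      have hlen2 : u.edges.length = h.1.1.edges.length +
          (u.edges.length - h.1.2.edges.length) := by
        simpa [colEl, List.length_append, List.length_drop] using congrArg List.length he'
      omega
    have hedges : h.1.1.edges = h.1.2.edges := by
      have e1 : h.1.1.edges = u.edges.take h.1.1.edges.length :=
        List.prefix_iff_eq_take.mp hpre1
      have e2 : h.1.2.edges = u.edges.take h.1.2.edges.length :=
        List.prefix_iff_eq_take.mp hext.2
      rw [e1, e2, hlen]
    have hstart : h.1.1.start = h.1.2.start := by
      rw [hs'.symm, hext.1]
    exact ⟨gpath_ext hstart.symm hedges.symm, ⟨hs'.symm, hpre1⟩⟩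
  · -- second branch: forces h.1.2 = u, contradicting hn
    exfalso
    have hdrop : h.1.2.edges.drop u.edges.length = [] := by
      have hcol : (colEl u).1.2.edges = [] := rfl
      rw [hcol] at he'
      exact (List.append_eq_nil_iff.mp he'.symm).2
    have hlen : h.1.2.edges.length ≤ u.edges.length := List.drop_eq_nil_iff.mp hdrop
    have h12 : u = h.1.2 := eq_of_ext_of_len hext hlen
    exact hn (h12 ▸ ext_refl u)

/-! ### prefix dichotomies -/

theorem dichot_left {q₀ : GPath src rng} {x : GISElem src rng}
    (h1 : oe (diagEl q₀) * oe x ≠ oe x) (h2 : oe (diagEl q₀) * oe x ≠ 0) :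
    Ext x.1.1 q₀ ∧ x.1.1 ≠ q₀ := by
  by_cases hc1 : Ext q₀ x.1.1
  · exfalso
    apply h1
    obtain ⟨hs, t, ht⟩ := hc1
    refine mul_pos₁ ⟨hs, t, ht⟩ hs.symm ?_ rfl
    have hdrop : x.1.1.edges.drop q₀.edges.length = t := by
      rw [← ht, List.drop_left]
    simp only [diagEl]
    rw [hdrop, ht]
  · by_cases hc2 : Ext x.1.1 q₀
    · refine ⟨hc2, fun heq => hc1 ?_⟩
      rw [heq]
      exact ext_refl q₀
    · exact absurd (mul_zero_of_not_ext hc1 hc2) h2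

theorem dichot_right {p₀ : GPath src rng} {x : GISElem src rng}
    (h1 : oe x * oe (diagEl p₀) ≠ oe x) (h2 : oe x * oe (diagEl p₀) ≠ 0) :
    Ext x.1.2 p₀ ∧ x.1.2 ≠ p₀ := by
  by_cases hc1 : Ext x.1.2 p₀
  · refine ⟨hc1, fun heq => h1 ?_⟩
    refine mul_pos₁ hc1 rfl ?_ heq
    rw [heq]
    simp [diagEl, List.drop_length]
  · by_cases hc2 : Ext p₀ x.1.2
    · exfalso
      apply h1
      obtain ⟨hs, t, ht⟩ := hc2
      refine mul_pos₂ hc1 ⟨hs, t, ht⟩ rfl hs.symm ?_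
      have hdrop : x.1.2.edges.drop p₀.edges.length = t := by
        rw [← ht, List.drop_left]
      simp only [diagEl]
      rw [hdrop, ht]
    · exact absurd (mul_zero_of_not_ext hc1 hc2) h2

/-! ### take paths -/

def takePath (u : GPath src rng) (k : ℕ) : GPath src rng :=
  ⟨u.start, u.edges.take k, by
    have h := u.isPath
    rw [← List.take_append_drop k u.edges, isPathFrom_append] at h
    exact h.1⟩

theorem takePath_of_ext {p u : GPath src rng} (h : Ext p u) :
    p = takePath u p.edges.length := by
  refine gpath_ext h.1 ?_
  exact List.prefix_iff_eq_take.mp h.2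

theorem some_eq_oe (a : GISElem src rng) : (some a : GIS src rng) = oe a := rfl

/-! ### topology section -/

section Topology
open Filter Topology Set
set_option linter.unusedSectionVars false
set_option linter.unusedVariables false

variable {S : Type*} [TopologicalSpace S] [T2Space S] [Mul S]
variable {ι : GIS src rng → S}

theorem nhds_box (hSmul : Continuous (fun p : S × S => p.1 * p.2)) {x y : S} {W : Set S}
    (hW : W ∈ 𝓝 (x * y)) :
    ∃ U ∈ 𝓝 x, ∃ V ∈ 𝓝 y, ∀ a ∈ U, ∀ b ∈ V, a * b ∈ W := by
  have h1 : (fun p : S × S => p.1 * p.2) ⁻¹' W ∈ 𝓝 (x, y) := hSmul.continuousAt hW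
  rw [mem_nhds_prod_iff] at h1
  obtain ⟨u, hu, v, hv, hsub⟩ := h1
  exact ⟨u, hu, v, hv, fun a ha b hb => hsub (Set.mk_mem_prod ha hb)⟩

theorem zero_mul_S (hSmul : Continuous (fun p : S × S => p.1 * p.2))
    (hhom : ∀ x y : GIS src rng, ι (x * y) = ι x * ι y)
    (hdense : DenseRange ι) (s : S) : ι 0 * s = ι 0 := by
  have hc1 : Continuous (fun s : S => ι 0 * s) :=
    hSmul.comp (continuous_const.prodMk continuous_id)
  have := hdense.equalizer hc1 continuous_const (funext fun x => by
    show ι 0 * ι x = ι 0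
    rw [← hhom, GIS.zero_mul])
  exact congrFun this s

theorem mul_zero_S (hSmul : Continuous (fun p : S × S => p.1 * p.2))
    (hhom : ∀ x y : GIS src rng, ι (x * y) = ι x * ι y)
    (hdense : DenseRange ι) (s : S) : s * ι 0 = ι 0 := by
  have hc1 : Continuous (fun s : S => s * ι 0) :=
    hSmul.comp (continuous_id.prodMk continuous_const)
  have := hdense.equalizer hc1 continuous_const (funext fun x => by
    show ι x * ι 0 = ι 0
    rw [← hhom, gis_mul_zero])
  exact congrFun this s

theorem isolated_of_detector (hdense : DenseRange ι) {T : Set S} (hT : IsOpen T) {c : S}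
    (hc : c ∈ T) (huniq : ∀ g : GIS src rng, ι g ∈ T → ι g = c) : IsOpen ({c} : Set S) := by
  have hTs : T = {c} := by
    rw [Set.eq_singleton_iff_unique_mem]
    refine ⟨hc, fun s hs => ?_⟩
    by_contra hne
    have hopen : IsOpen (T ∩ {c}ᶜ) := hT.inter isClosed_singleton.isOpen_compl
    obtain ⟨g, hg⟩ := hdense.exists_mem_open hopen ⟨s, hs, hne⟩
    exact hg.2 (huniq g hg.1)
  rw [← hTs]; exact hT

theorem exists_accPt (hCLP : CLPCompact S) {B : Set S} (hB : B.Infinite)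
    (hiso : ∀ b ∈ B, IsOpen ({b} : Set S)) : ∃ x : S, AccPt x (𝓟 B) := by
  by_contra hno
  push_neg at hno
  have hBopen : IsOpen B := by
    have hrw : B = ⋃ b ∈ B, {b} := by simp
    rw [hrw]; exact isOpen_biUnion hiso
  have hBclosed : IsClosed B := by
    apply isClosed_of_closure_subset
    intro y hy
    by_contra hyB
    apply hno y
    rw [accPt_iff_nhds]
    intro U hU
    obtain ⟨z, hz⟩ := mem_closure_iff_nhds.mp hy U hU
    exact ⟨z, hz, fun h => hyB (h ▸ hz.2)⟩
  obtain ⟨ℱ, hsub, hfin, hun⟩ := hCLP (insert Bᶜ ((fun b => ({b} : Set S)) '' B))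
    (by
      intro U hU
      rcases Set.mem_insert_iff.mp hU with rfl | hU'
      · exact ⟨hBopen.isClosed_compl, hBclosed.isOpen_compl⟩
      · obtain ⟨b, hb, rfl⟩ := hU'
        exact ⟨isClosed_singleton, hiso b hb⟩)
    (by
      apply Set.eq_univ_of_forall
      intro x
      by_cases hx : x ∈ B
      · exact ⟨{x}, Set.mem_insert_iff.mpr (Or.inr ⟨x, hx, rfl⟩), rfl⟩
      · exact ⟨Bᶜ, Set.mem_insert_iff.mpr (Or.inl rfl), hx⟩)
  apply hB
  have hBrw : B = ⋃ F ∈ ℱ, F ∩ B := by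
    apply Set.Subset.antisymm
    · intro b hb
      have : b ∈ ⋃₀ ℱ := hun ▸ Set.mem_univ b
      obtain ⟨F, hF, hbF⟩ := this
      exact Set.mem_biUnion hF ⟨hbF, hb⟩
    · intro b hb
      simp only [Set.mem_iUnion] at hb
      obtain ⟨F, _, _, hbB⟩ := hb
      exact hbB
  rw [hBrw]
  refine hfin.biUnion ?_
  intro F hF
  rcases Set.mem_insert_iff.mp (hsub hF) with rfl | ⟨b, _, rfl⟩
  · simp
  · exact (Set.finite_singleton b).subset Set.inter_subset_left

theorem traces_infinite {ℐ : Type*} {A : ℐ → S} (hinjA : Function.Injective A)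
    {bad : Set ℐ} {x : S} (hx : AccPt x (𝓟 (A '' bad))) :
    ∀ N ∈ 𝓝 x, {α | A α ∈ N}.Infinite := by
  intro N hN
  by_contra hFin
  rw [Set.not_infinite] at hFin
  have hfin2 : ((A '' {α | A α ∈ N}) \ {x}).Finite := ((hFin.image A).diff)
  have hN' : N ∩ ((A '' {α | A α ∈ N}) \ {x})ᶜ ∈ 𝓝 x := by
    refine Filter.inter_mem hN (hfin2.isClosed.isOpen_compl.mem_nhds ?_)
    simp
  obtain ⟨y, ⟨⟨hyN, hyC⟩, hyB⟩, hyx⟩ := accPt_iff_nhds.mp hx _ hN'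
  obtain ⟨α, _, rfl⟩ := hyB
  exact hyC ⟨⟨α, hyN, rfl⟩, hyx⟩

theorem conc_kernel {ℐ : Type*} [Infinite ℐ] (hCLP : CLPCompact S) (A : ℐ → S)
    (hinjA : Function.Injective A) (hiso : ∀ α, IsOpen ({A α} : Set S))
    (hkill : ∀ x : S, x ≠ ι 0 → (∀ N ∈ 𝓝 x, {α | A α ∈ N}.Infinite) → False) :
    ∀ W : Set S, IsOpen W → ι 0 ∈ W → {α | A α ∉ W}.Finite := by
  intro W hW hzW
  by_contra hbad
  rw [← Set.not_infinite, not_not] at hbad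
  have hBinf : (A '' {α | A α ∉ W}).Infinite := hbad.image hinjA.injOn
  obtain ⟨x, hx⟩ := exists_accPt hCLP hBinf (by rintro b ⟨α, _, rfl⟩; exact hiso α)
  have hxW : x ∉ W := by
    have hxcl : x ∈ closure (A '' {α | A α ∉ W}) := by
      rw [mem_closure_iff_nhds]
      intro t ht
      obtain ⟨y, hy, _⟩ := accPt_iff_nhds.mp hx t ht
      exact ⟨y, hy⟩
    have hsubW : closure (A '' {α | A α ∉ W}) ⊆ Wᶜ :=
      closure_minimal (by rintro y ⟨α, hα, rfl⟩; exact hα) hW.isClosed_compl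
    exact hsubW hxcl
  exact hkill x (fun h => hxW (h ▸ hzW)) (traces_infinite hinjA hx)

theorem conc_of_orth_idem {ℐ : Type*} [Infinite ℐ]
    (hCLP : CLPCompact S) (hSmul : Continuous (fun p : S × S => p.1 * p.2))
    (A : ℐ → S)
    (hinjA : Function.Injective A) (hiso : ∀ α, IsOpen ({A α} : Set S))
    (hidem : ∀ α, A α * A α = A α) (horth : ∀ α β, α ≠ β → A α * A β = ι 0) :
    ∀ W : Set S, IsOpen W → ι 0 ∈ W → {α | A α ∉ W}.Finite := by
  refine conc_kernel hCLP A hinjA hiso ?_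
  intro x hxz htr
  have hxx : x * x = ι 0 := by
    by_contra hne
    have hW : ({ι 0}ᶜ : Set S) ∈ 𝓝 (x * x) :=
      isClosed_singleton.isOpen_compl.mem_nhds hne
    obtain ⟨U, hU, Vv, hV, hbox⟩ := nhds_box hSmul hW
    have h1 := htr (U ∩ Vv) (Filter.inter_mem hU hV)
    obtain ⟨α, hα⟩ := h1.nonempty
    obtain ⟨β, hβ⟩ := (h1.diff (Set.finite_singleton α)).nonempty
    have hprod := hbox _ hα.1 _ hβ.1.2
    rw [horth α β (fun h => hβ.2 (by simp [h]))] at hprod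
    exact hprod rfl
  obtain ⟨u, v, hu, hv, hxu, hzv, hdisj⟩ := t2_separation hxz
  have hσ : ContinuousAt (fun s : S => s * s) x :=
    (hSmul.comp (continuous_id.prodMk continuous_id)).continuousAt
  have hval : x * x ∈ v := by rw [hxx]; exact hzv
  have hpre : (fun s : S => s * s) ⁻¹' v ∈ 𝓝 x := hσ (hv.mem_nhds hval)
  have htr' := htr (u ∩ (fun s : S => s * s) ⁻¹' v) (Filter.inter_mem (hu.mem_nhds hxu) hpre)
  obtain ⟨α, hα⟩ := htr'.nonempty
  have : A α ∈ v := by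
    have := hα.2
    simpa [hidem α] using this
  exact Set.disjoint_left.mp hdisj hα.1 this

theorem conc_push_left {ℐ : Type*} [Infinite ℐ]
    (hCLP : CLPCompact S) (hSmul : Continuous (fun p : S × S => p.1 * p.2))
    (hhom : ∀ x y : GIS src rng, ι (x * y) = ι x * ι y)
    (hdense : DenseRange ι)
    (A C : ℐ → S)
    (hconcA : ∀ W : Set S, IsOpen W → ι 0 ∈ W → {α | A α ∉ W}.Finite)
    (hinjC : Function.Injective C) (hisoC : ∀ α, IsOpen ({C α} : Set S))
    (hrel : ∀ α, A α * C α = C α) :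
    ∀ W : Set S, IsOpen W → ι 0 ∈ W → {α | C α ∉ W}.Finite := by
  refine conc_kernel hCLP C hinjC hisoC ?_
  intro x hxz htr
  obtain ⟨u, v, hu, hv, hxu, hzv, hdisj⟩ := t2_separation hxz
  have habs : ι 0 * x = ι 0 := zero_mul_S hSmul hhom hdense x
  have hWnb : v ∈ 𝓝 (ι 0 * x) := hv.mem_nhds (by rw [habs]; exact hzv)
  obtain ⟨U, hU, Vv, hV, hbox⟩ := nhds_box hSmul hWnb
  obtain ⟨U', hU'sub, hU'open, hzU'⟩ := mem_nhds_iff.mp hU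
  have hfin := hconcA U' hU'open hzU'
  have htr' := htr (Vv ∩ u) (Filter.inter_mem hV (hu.mem_nhds hxu))
  obtain ⟨α, hα⟩ := (htr'.diff hfin).nonempty
  have h1 : A α * C α ∈ v := hbox _ (hU'sub (not_not.mp hα.2)) _ hα.1.1
  rw [hrel] at h1
  exact Set.disjoint_left.mp hdisj hα.1.2 h1

/-! ### isolation of elements with cycle-free range -/

theorem S_mul (hhom : ∀ x y : GIS src rng, ι (x * y) = ι x * ι y)
    {a b c : GISElem src rng} (h : oe a * oe b = oe c) :
    ι (oe a) * ι (oe b) = ι (oe c) := by rw [← hhom, h]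

theorem S_mul_zero (hhom : ∀ x y : GIS src rng, ι (x * y) = ι x * ι y)
    {a b : GISElem src rng} (h : oe a * oe b = 0) :
    ι (oe a) * ι (oe b) = ι 0 := by rw [← hhom, h]

theorem iso_vert (hSmul : Continuous (fun p : S × S => p.1 * p.2))
    (hinj : Function.Injective ι)
    (hhom : ∀ x y : GIS src rng, ι (x * y) = ι x * ι y)
    (hdense : DenseRange ι) {f : V}
    (hf : ¬ HasCycleAt src rng f) :
    IsOpen ({ι (oe (vertEl src rng f))} : Set S) := by
  by_contra hniso
  set w : S := ι (oe (vertEl src rng f)) with hw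
  have hwz : w ≠ ι 0 := fun h => oe_ne_zero _ (hinj h)
  -- w is in the closure of the rest of the range of ι
  have hcl : w ∈ closure (Set.range ι \ {w}) := by
    rw [mem_closure_iff_nhds]
    intro t ht
    obtain ⟨O, hOsub, hOopen, hwO⟩ := mem_nhds_iff.mp ht
    have hOne : (O ∩ {w}ᶜ).Nonempty := by
      by_contra hempty
      apply hniso
      have hOw : O = {w} := by
        rw [Set.eq_singleton_iff_unique_mem]
        refine ⟨hwO, fun s hs => ?_⟩
        by_contra hne
        exact hempty ⟨s, hs, hne⟩
      rw [← hOw]; exact hOopen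
    obtain ⟨g, hg⟩ := hdense.exists_mem_open (hOopen.inter isClosed_singleton.isOpen_compl) hOne
    exact ⟨ι g, hOsub hg.1, ⟨g, rfl⟩, hg.2⟩
  set G : Filter S := 𝓝 w ⊓ 𝓟 (Set.range ι \ {w}) with hGdef
  have hGne : G.NeBot := mem_closure_iff_clusterPt.mp hcl
  have hGle : G ≤ 𝓝 w := inf_le_left
  have hGpr : Set.range ι \ {w} ∈ G := mem_inf_of_right (mem_principal_self _)
  -- the squeezing map
  have hcontF : Continuous (fun s : S => w * s * w) := by
    have h1 : Continuous (fun s : S => w * s) :=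
      hSmul.comp (continuous_const.prodMk continuous_id)
    have h2 : Continuous (fun s : S => s * w) :=
      hSmul.comp (continuous_id.prodMk continuous_const)
    exact h2.comp h1
  have hFw : w * w * w = w := by
    rw [hw]
    rw [S_mul hhom (vert_mul_vert f), S_mul hhom (vert_mul_vert f)]
  have htendF : Tendsto (fun s : S => w * s * w) G (𝓝 w) := by
    have h1 : Tendsto (fun s : S => w * s * w) (𝓝 w) (𝓝 (w * w * w)) :=
      hcontF.continuousAt
    rw [hFw] at h1
    exact h1.mono_left hGle
  -- eventually values are elements of Φ_f
  have hEv : ∀ᶠ x in G, ∃ h : GISElem src rng, h.1.1.start = f ∧ h.1.2.start = f ∧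
      h ≠ vertEl src rng f ∧ x = ι (oe h) := by
    have hne' : ({ι (0 : GIS src rng)}ᶜ : Set S) ∈ 𝓝 w :=
      isClosed_singleton.isOpen_compl.mem_nhds hwz
    filter_upwards [htendF hne', hGpr] with x hx1 hx2
    obtain ⟨⟨g, rfl⟩, hxw⟩ := hx2
    cases g with
    | none =>
      exfalso
      apply hx1
      simp only [Set.mem_singleton_iff]
      show w * ι (0 : GIS src rng) * w = ι 0
      rw [mul_zero_S hSmul hhom hdense, zero_mul_S hSmul hhom hdense]
    | some a =>
      by_cases hstart1 : a.1.1.start = f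
      · by_cases hstart2 : a.1.2.start = f
        · refine ⟨a, hstart1, hstart2, fun hEq => hxw ?_, (some_eq_oe a) ▸ rfl⟩
          simp only [Set.mem_singleton_iff, hw]
          rw [some_eq_oe, hEq]
        · exfalso
          apply hx1
          simp only [Set.mem_singleton_iff]
          rw [some_eq_oe]
          have e1 : w * ι (oe a) = ι (oe a) := by
            rw [hw]; exact S_mul hhom (vert_mul hstart1)
          rw [e1, hw, S_mul_zero hhom (mul_vert_eq_zero hstart2)]
      · exfalso
        apply hx1
        simp only [Set.mem_singleton_iff]
        rw [some_eq_oe]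
        have e1 : w * ι (oe a) = ι 0 := by
          rw [hw]; exact S_mul_zero hhom (vert_mul_eq_zero hstart1)
        rw [e1, zero_mul_S hSmul hhom hdense]
  -- pick a reference element
  obtain ⟨x₀, n₀, hp0f, hq0f, hn0ne, hx0⟩ := hEv.exists
  set p₀ : GPath src rng := n₀.1.1 with hp₀
  set q₀ : GPath src rng := n₀.1.2 with hq₀
  have hp0ne : p₀.edges ≠ [] := by
    intro hnil
    have hp0v : p₀ = vpath src rng f := gpath_ext hp0f hnil
    have hq0r : q₀.range = f := by
      rw [hq₀, ← n₀.2, ← hp₀, hp0v]; simp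
    exact hn0ne (elem_ext hp0v (eq_vpath_of_loop hf hq0f hq0r))
  have hq0ne : q₀.edges ≠ [] := by
    intro hnil
    have hq0v : q₀ = vpath src rng f := gpath_ext hq0f hnil
    have hp0r : p₀.range = f := by
      rw [hp₀, n₀.2, ← hq₀, hq0v]; simp
    exact hn0ne (elem_ext (eq_vpath_of_loop hf hp0f hp0r) hq0v)
  set H : S := ι (oe (diagEl q₀)) with hH
  set K : S := ι (oe (diagEl p₀)) with hK
  have hHw : H * w = H := by
    rw [hH, hw]; exact S_mul hhom (mul_vert hq0f)
  have hwK : w * K = K := by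
    rw [hK, hw]; exact S_mul hhom (vert_mul hp0f)
  have hHne : H ≠ w := by
    intro h
    have := oe_inj (hinj (hH ▸ hw ▸ h))
    exact hq0ne (congrArg (fun e : GISElem src rng => e.1.1.edges) this)
  have hKne : K ≠ w := by
    intro h
    have := oe_inj (hinj (hK ▸ hw ▸ h))
    exact hp0ne (congrArg (fun e : GISElem src rng => e.1.1.edges) this)
  have hHz : H ≠ ι 0 := fun h => oe_ne_zero _ (hinj (hH ▸ h))
  have hKz : K ≠ ι 0 := fun h => oe_ne_zero _ (hinj (hK ▸ h))
  have hcontH : Continuous (fun s : S => H * s) :=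
    hSmul.comp (continuous_const.prodMk continuous_id)
  have hcontK : Continuous (fun s : S => s * K) :=
    hSmul.comp (continuous_id.prodMk continuous_const)
  -- case 1 : frequently H * x = x
  by_cases hG1 : (G ⊓ 𝓟 {x : S | H * x = x}).NeBot
  · have hle1 : (G ⊓ 𝓟 {x : S | H * x = x}) ≤ 𝓝 w := le_trans inf_le_left hGle
    have ht1 : Tendsto (fun x : S => H * x) (G ⊓ 𝓟 {x : S | H * x = x}) (𝓝 (H * w)) :=
      (hcontH.continuousAt).mono_left hle1
    have ht2 : Tendsto (fun x : S => H * x) (G ⊓ 𝓟 {x : S | H * x = x}) (𝓝 w) := by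
      have hid : Tendsto (fun x : S => x) (G ⊓ 𝓟 {x : S | H * x = x}) (𝓝 w) :=
        tendsto_id.mono_left hle1
      refine Filter.Tendsto.congr' ?_ hid
      have : {x : S | H * x = x} ∈ (G ⊓ 𝓟 {x : S | H * x = x}) :=
        mem_inf_of_right (mem_principal_self _)
      filter_upwards [this] with x hx
      exact hx.symm
    have heq : H * w = w := tendsto_nhds_unique ht1 ht2
    rw [hHw] at heq
    exact hHne heq
  -- case 2 : frequently x * K = x
  by_cases hG2 : (G ⊓ 𝓟 {x : S | x * K = x}).NeBot
  · have hle2 : (G ⊓ 𝓟 {x : S | x * K = x}) ≤ 𝓝 w := le_trans inf_le_left hGle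
    have ht1 : Tendsto (fun x : S => x * K) (G ⊓ 𝓟 {x : S | x * K = x}) (𝓝 (w * K)) :=
      (hcontK.continuousAt).mono_left hle2
    have ht2 : Tendsto (fun x : S => x * K) (G ⊓ 𝓟 {x : S | x * K = x}) (𝓝 w) := by
      have hid : Tendsto (fun x : S => x) (G ⊓ 𝓟 {x : S | x * K = x}) (𝓝 w) :=
        tendsto_id.mono_left hle2
      refine Filter.Tendsto.congr' ?_ hid
      have : {x : S | x * K = x} ∈ (G ⊓ 𝓟 {x : S | x * K = x}) :=
        mem_inf_of_right (mem_principal_self _)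
      filter_upwards [this] with x hx
      exact hx.symm
    have heq : w * K = w := tendsto_nhds_unique ht1 ht2
    rw [hwK] at heq
    exact hKne heq
  -- main case : eventually both fail, trap in a finite set
  have hA1 : {x : S | H * x = x}ᶜ ∈ G := by
    rw [Filter.not_neBot, Filter.inf_principal_eq_bot] at hG1
    exact hG1
  have hA2 : {x : S | x * K = x}ᶜ ∈ G := by
    rw [Filter.not_neBot, Filter.inf_principal_eq_bot] at hG2
    exact hG2
  have hHx : ∀ᶠ x in G, H * x ≠ ι (0 : GIS src rng) := by
    have ht : Tendsto (fun x : S => H * x) G (𝓝 (H * w)) :=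
      (hcontH.continuousAt).mono_left hGle
    rw [hHw] at ht
    have := ht (isClosed_singleton.isOpen_compl.mem_nhds hHz)
    filter_upwards [this] with x hx
    exact hx
  have hxK : ∀ᶠ x in G, x * K ≠ ι (0 : GIS src rng) := by
    have ht : Tendsto (fun x : S => x * K) G (𝓝 (w * K)) :=
      (hcontK.continuousAt).mono_left hGle
    rw [hwK] at ht
    have := ht (isClosed_singleton.isOpen_compl.mem_nhds hKz)
    filter_upwards [this] with x hx
    exact hx
  set Cset : Set S := {x | ∃ h : GISElem src rng, Ext h.1.1 q₀ ∧ Ext h.1.2 p₀ ∧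
      h ≠ vertEl src rng f ∧ x = ι (oe h)} with hCdef
  have hCmem : Cset ∈ G := by
    have hEv' : ∀ᶠ x in G, x ∈ Cset := by
      filter_upwards [hEv, hA1, hA2, hHx, hxK] with x hx hA1x hA2x hHxne hxKne
      obtain ⟨h, h1f, h2f, hnev, rfl⟩ := hx
      have d1 : Ext h.1.1 q₀ ∧ h.1.1 ≠ q₀ := by
        apply dichot_left
        · intro hEq
          exact hA1x (by rw [hH] at *; exact S_mul hhom hEq)
        · intro hEq
          exact hHxne (by rw [hH]; exact S_mul_zero hhom hEq)
      have d2 : Ext h.1.2 p₀ ∧ h.1.2 ≠ p₀ := by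
        apply dichot_right
        · intro hEq
          exact hA2x (by rw [hK] at *; exact S_mul hhom hEq)
        · intro hEq
          exact hxKne (by rw [hK]; exact S_mul_zero hhom hEq)
      exact ⟨h, d1.1, d2.1, hnev, rfl⟩
    exact hEv'
  have hCfin : Cset.Finite := by
    have hsub : Cset ⊆ ⋃ k ∈ Set.Iic q₀.edges.length, ⋃ l ∈ Set.Iic p₀.edges.length,
        {x : S | ∃ h : GISElem src rng, h.1.1 = takePath q₀ k ∧ h.1.2 = takePath p₀ l ∧
          x = ι (oe h)} := by
      rintro x ⟨h, he1, he2, _, rfl⟩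
      refine Set.mem_biUnion (Set.mem_Iic.mpr he1.2.length_le) ?_
      refine Set.mem_biUnion (Set.mem_Iic.mpr he2.2.length_le) ?_
      exact ⟨h, takePath_of_ext he1, takePath_of_ext he2, rfl⟩
    refine Set.Finite.subset ?_ hsub
    refine (Set.finite_Iic _).biUnion (fun k _ => (Set.finite_Iic _).biUnion (fun l _ => ?_))
    apply Set.Subsingleton.finite
    rintro x ⟨h1, ha1, hb1, rfl⟩ y ⟨h2, ha2, hb2, rfl⟩
    rw [elem_ext (ha1.trans ha2.symm) (hb1.trans hb2.symm)]
  have hwC : w ∈ Cset := by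
    have h1 : w ∈ closure Cset := by
      rw [mem_closure_iff_clusterPt]
      exact Filter.NeBot.mono hGne (le_inf hGle (Filter.le_principal_iff.mpr hCmem))
    rwa [hCfin.isClosed.closure_eq] at h1
  obtain ⟨h, _, _, hnev, hwEq⟩ := hwC
  exact hnev (oe_inj (hinj (hw ▸ hwEq))).symm

theorem iso_col (hSmul : Continuous (fun p : S × S => p.1 * p.2))
    (hinj : Function.Injective ι)
    (hhom : ∀ x y : GIS src rng, ι (x * y) = ι x * ι y)
    (hdense : DenseRange ι) {f : V}
    (hf : ¬ HasCycleAt src rng f) {u : GPath src rng} (hu : u.range = f) :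
    IsOpen ({ι (oe (colEl u))} : Set S) := by
  have hvert : IsOpen ({ι (oe (vertEl src rng u.range))} : Set S) := by
    rw [hu]; exact iso_vert hSmul hinj hhom hdense hf
  have hTopen : IsOpen ((fun s : S => ι (oe (rowEl u)) * s) ⁻¹'
      {ι (oe (vertEl src rng u.range))}) :=
    (hSmul.comp (continuous_const.prodMk continuous_id)).isOpen_preimage _ hvert
  refine isolated_of_detector hdense hTopen ?_ ?_
  · simp only [Set.mem_preimage, Set.mem_singleton_iff]
    exact S_mul hhom (row_mul_col u)
  · intro g hg
    simp only [Set.mem_preimage, Set.mem_singleton_iff] at hg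
    cases g with
    | none =>
      exfalso
      rw [show ι (none : GIS src rng) = ι 0 from rfl,
        mul_zero_S hSmul hhom hdense] at hg
      exact oe_ne_zero _ (hinj hg.symm)
    | some a =>
      have hgis : oe (rowEl u) * oe a = oe (vertEl src rng u.range) :=
        hinj (by rw [hhom]; exact hg)
      rw [some_eq_oe, sol_col hgis]

theorem iso_row (hSmul : Continuous (fun p : S × S => p.1 * p.2))
    (hinj : Function.Injective ι)
    (hhom : ∀ x y : GIS src rng, ι (x * y) = ι x * ι y)
    (hdense : DenseRange ι) {f : V}
    (hf : ¬ HasCycleAt src rng f) {u : GPath src rng} (hu : u.range = f) :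
    IsOpen ({ι (oe (rowEl u))} : Set S) := by
  have hvert : IsOpen ({ι (oe (vertEl src rng u.range))} : Set S) := by
    rw [hu]; exact iso_vert hSmul hinj hhom hdense hf
  have hTopen : IsOpen ((fun s : S => s * ι (oe (colEl u))) ⁻¹'
      {ι (oe (vertEl src rng u.range))}) :=
    (hSmul.comp (continuous_id.prodMk continuous_const)).isOpen_preimage _ hvert
  refine isolated_of_detector hdense hTopen ?_ ?_
  · simp only [Set.mem_preimage, Set.mem_singleton_iff]
    exact S_mul hhom (row_mul_col u)
  · intro g hg
    simp only [Set.mem_preimage, Set.mem_singleton_iff] at hg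
    cases g with
    | none =>
      exfalso
      rw [show ι (none : GIS src rng) = ι 0 from rfl,
        zero_mul_S hSmul hhom hdense] at hg
      exact oe_ne_zero _ (hinj hg.symm)
    | some a =>
      have hgis : oe a * oe (colEl u) = oe (vertEl src rng u.range) :=
        hinj (by rw [hhom]; exact hg)
      rw [some_eq_oe, sol_row hgis]

theorem iso_diag (hSmul : Continuous (fun p : S × S => p.1 * p.2))
    (hinj : Function.Injective ι)
    (hhom : ∀ x y : GIS src rng, ι (x * y) = ι x * ι y)
    (hdense : DenseRange ι) {f : V}
    (hf : ¬ HasCycleAt src rng f) {u : GPath src rng} (hu : u.range = f) :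
    IsOpen ({ι (oe (diagEl u))} : Set S) := by
  have hcol : IsOpen ({ι (oe (colEl u))} : Set S) := iso_col hSmul hinj hhom hdense hf hu
  have hT0 : IsOpen ((fun s : S => s * ι (oe (colEl u))) ⁻¹' {ι (oe (colEl u))}) :=
    (hSmul.comp (continuous_id.prodMk continuous_const)).isOpen_preimage _ hcol
  have hTruncFin : ((fun k => ι (oe (diagEl (takePath u k)))) '' Set.Iic u.edges.length).Finite :=
    (Set.finite_Iic _).image _
  have hTopen : IsOpen ((fun s : S => s * ι (oe (colEl u))) ⁻¹' {ι (oe (colEl u))} ∩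
      (((fun k => ι (oe (diagEl (takePath u k)))) '' Set.Iic u.edges.length) \
        {ι (oe (diagEl u))})ᶜ) :=
    hT0.inter (hTruncFin.diff (t := {ι (oe (diagEl u))})).isClosed.isOpen_compl
  refine isolated_of_detector hdense hTopen ?_ ?_
  · constructor
    · simp only [Set.mem_preimage, Set.mem_singleton_iff]
      exact S_mul hhom (diag_mul_col u)
    · simp
  · intro g hg
    obtain ⟨hg1, hg2⟩ := hg
    simp only [Set.mem_preimage, Set.mem_singleton_iff] at hg1
    cases g with
    | none =>
      exfalso
      rw [show ι (none : GIS src rng) = ι 0 from rfl,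
        zero_mul_S hSmul hhom hdense] at hg1
      exact oe_ne_zero _ (hinj hg1.symm)
    | some a =>
      have hgis : oe a * oe (colEl u) = oe (colEl u) :=
        hinj (by rw [hhom]; exact hg1)
      obtain ⟨h12, hext⟩ := sol_diag hgis
      have ha : a = diagEl a.1.1 := elem_ext rfl h12
      have hmem : ι (some a) ∈
          (fun k => ι (oe (diagEl (takePath u k)))) '' Set.Iic u.edges.length := by
        refine ⟨a.1.1.edges.length, Set.mem_Iic.mpr hext.2.length_le, ?_⟩
        show ι (oe (diagEl (takePath u a.1.1.edges.length))) = ι (some a)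
        rw [← takePath_of_ext hext, ← ha, some_eq_oe]
      by_contra hne
      exact hg2 ⟨hmem, hne⟩

theorem conc_push_right {ℐ : Type*} [Infinite ℐ]
    (hCLP : CLPCompact S) (hSmul : Continuous (fun p : S × S => p.1 * p.2))
    (hhom : ∀ x y : GIS src rng, ι (x * y) = ι x * ι y)
    (hdense : DenseRange ι)
    (A C : ℐ → S)
    (hconcA : ∀ W : Set S, IsOpen W → ι 0 ∈ W → {α | A α ∉ W}.Finite)
    (hinjC : Function.Injective C) (hisoC : ∀ α, IsOpen ({C α} : Set S))
    (hrel : ∀ α, C α * A α = C α) :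
    ∀ W : Set S, IsOpen W → ι 0 ∈ W → {α | C α ∉ W}.Finite := by
  refine conc_kernel hCLP C hinjC hisoC ?_
  intro x hxz htr
  obtain ⟨u, v, hu, hv, hxu, hzv, hdisj⟩ := t2_separation hxz
  have habs : x * ι 0 = ι 0 := mul_zero_S hSmul hhom hdense x
  have hWnb : v ∈ 𝓝 (x * ι 0) := hv.mem_nhds (by rw [habs]; exact hzv)
  obtain ⟨U, hU, Vv, hV, hbox⟩ := nhds_box hSmul hWnb
  obtain ⟨V', hV'sub, hV'open, hzV'⟩ := mem_nhds_iff.mp hV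
  have hfin := hconcA V' hV'open hzV'
  have htr' := htr (U ∩ u) (Filter.inter_mem hU (hu.mem_nhds hxu))
  obtain ⟨α, hα⟩ := (htr'.diff hfin).nonempty
  have h1 : C α * A α ∈ v := hbox _ hα.1.1 _ (hV'sub (not_not.mp hα.2))
  rw [hrel] at h1
  exact Set.disjoint_left.mp hdisj hα.1.2 h1

theorem part1 (hSmul : Continuous (fun p : S × S => p.1 * p.2))
    (hCLP : CLPCompact S)
    (hinj : Function.Injective ι)
    (hhom : ∀ x y : GIS src rng, ι (x * y) = ι x * ι y)
    (hdense : DenseRange ι)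
    (f : V) (hf : ¬ HasCycleAt src rng f) :
    {u : GPath src rng | u.range = f}.Finite := by
  by_contra hinf
  rw [← Set.not_infinite, not_not] at hinf
  haveI : Infinite ↥{u : GPath src rng | u.range = f} := Set.infinite_coe_iff.mpr hinf
  set ℐ := ↥{u : GPath src rng | u.range = f} with hI
  set A : ℐ → S := fun α => ι (oe (diagEl α.1)) with hA
  set C : ℐ → S := fun α => ι (oe (colEl α.1)) with hC
  set R : ℐ → S := fun α => ι (oe (rowEl α.1)) with hR
  have hrange : ∀ α : ℐ, α.1.range = f := fun α => α.2
  have hAinj : Function.Injective A := fun α β h =>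
    Subtype.ext (congrArg (fun e : GISElem src rng => e.1.1) (oe_inj (hinj h)))
  have hCinj : Function.Injective C := fun α β h =>
    Subtype.ext (congrArg (fun e : GISElem src rng => e.1.1) (oe_inj (hinj h)))
  have hRinj : Function.Injective R := fun α β h =>
    Subtype.ext (congrArg (fun e : GISElem src rng => e.1.2) (oe_inj (hinj h)))
  have hconcA : ∀ W : Set S, IsOpen W → ι 0 ∈ W → {α : ℐ | A α ∉ W}.Finite := by
    refine conc_of_orth_idem hCLP hSmul A hAinj
      (fun α => iso_diag hSmul hinj hhom hdense hf (hrange α)) ?_ ?_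
    · intro α
      exact S_mul hhom (diag_mul_diag α.1)
    · intro α β hne
      exact S_mul_zero hhom (diag_mul_diag_zero hf (hrange α) (hrange β)
        (fun h => hne (Subtype.ext h)))
  have hconcC : ∀ W : Set S, IsOpen W → ι 0 ∈ W → {α : ℐ | C α ∉ W}.Finite := by
    refine conc_push_left hCLP hSmul hhom hdense A C hconcA hCinj
      (fun α => iso_col hSmul hinj hhom hdense hf (hrange α)) ?_
    intro α
    exact S_mul hhom (diag_mul_col α.1)
  have hconcR : ∀ W : Set S, IsOpen W → ι 0 ∈ W → {α : ℐ | R α ∉ W}.Finite := by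
    refine conc_push_right hCLP hSmul hhom hdense A R hconcA hRinj
      (fun α => iso_row hSmul hinj hhom hdense hf (hrange α)) ?_
    intro α
    exact S_mul hhom (row_mul_diag α.1)
  -- the contradiction
  have hWopen : IsOpen ({ι (oe (vertEl src rng f))}ᶜ : Set S) :=
    isClosed_singleton.isOpen_compl
  have hzW : ι (0 : GIS src rng) ∈ ({ι (oe (vertEl src rng f))}ᶜ : Set S) := by
    simp only [Set.mem_compl_iff, Set.mem_singleton_iff]
    exact fun h => oe_ne_zero _ (hinj h.symm)
  have hWnb : ({ι (oe (vertEl src rng f))}ᶜ : Set S) ∈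
      𝓝 (ι (0 : GIS src rng) * ι (0 : GIS src rng)) := by
    rw [zero_mul_S hSmul hhom hdense]
    exact hWopen.mem_nhds hzW
  obtain ⟨U, hU, Vv, hV, hbox⟩ := nhds_box hSmul hWnb
  obtain ⟨U', hU'sub, hU'open, hzU'⟩ := mem_nhds_iff.mp hU
  obtain ⟨V', hV'sub, hV'open, hzV'⟩ := mem_nhds_iff.mp hV
  have hbadfin : ({α : ℐ | R α ∉ U'} ∪ {α : ℐ | C α ∉ V'}).Finite :=
    (hconcR U' hU'open hzU').union (hconcC V' hV'open hzV')
  obtain ⟨α, hα⟩ := hbadfin.infinite_compl.nonempty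
  simp only [Set.mem_compl_iff, Set.mem_union, Set.mem_setOf_eq, not_or, not_not] at hα
  have hprod : R α * C α ∈ ({ι (oe (vertEl src rng f))}ᶜ : Set S) :=
    hbox _ (hU'sub hα.1) _ (hV'sub hα.2)
  apply hprod
  simp only [Set.mem_singleton_iff]
  have := S_mul (ι := ι) hhom (row_mul_col α.1)
  rw [hR, hC]
  show ι (oe (rowEl α.1)) * ι (oe (colEl α.1)) = _
  rw [this, hrange α]

theorem part2gamma (hSmul : Continuous (fun p : S × S => p.1 * p.2))
    (hCLP : CLPCompact S)
    (hinj : Function.Injective ι)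
    (hhom : ∀ x y : GIS src rng, ι (x * y) = ι x * ι y)
    (hdense : DenseRange ι)
    {W : Set S} (hW : IsOpen W) (hzW : ι 0 ∈ W) :
    {d : GISElem src rng | ¬ HasCycleAt src rng d.1.1.range ∧ ι (oe d) ∉ W}.Finite := by
  have hpart1 := part1 (ι := ι) hSmul hCLP hinj hhom hdense
  by_contra hbad
  rw [← Set.not_infinite, not_not] at hbad
  set T : Set (GISElem src rng) :=
    {d | ¬ HasCycleAt src rng d.1.1.range ∧ ι (oe d) ∉ W} with hTdef
  have hrangeInf : ((fun d : GISElem src rng => d.1.1.range) '' T).Infinite := by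
    intro hfin
    apply hbad
    have hsub : T ⊆ ⋃ f ∈ (fun d : GISElem src rng => d.1.1.range) '' T,
        {d : GISElem src rng | d ∈ T ∧ d.1.1.range = f} := fun d hd =>
      Set.mem_biUnion ⟨d, hd, rfl⟩ ⟨hd, rfl⟩
    refine Set.Finite.subset (hfin.biUnion ?_) hsub
    rintro f ⟨d₀, hd₀, rfl⟩
    have hIf := hpart1 _ hd₀.1
    refine Set.Finite.of_finite_image
      (f := fun d : GISElem src rng => (d.1.1, d.1.2)) ?_ ?_
    · refine Set.Finite.subset (hIf.prod hIf) ?_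
      rintro ⟨p, q⟩ ⟨d, ⟨hdT, hdr⟩, heq⟩
      have h1 : d.1.1 = p := congrArg Prod.fst heq
      have h2 : d.1.2 = q := congrArg Prod.snd heq
      constructor
      · show p.range = d₀.1.1.range
        rw [← h1]; exact hdr
      · show q.range = d₀.1.1.range
        rw [← h2, ← d.2]; exact hdr
    · intro d1 _ d2 _ heq
      exact elem_ext (congrArg Prod.fst heq) (congrArg Prod.snd heq)
  haveI : Infinite ↥((fun d : GISElem src rng => d.1.1.range) '' T) :=
    Set.infinite_coe_iff.mpr hrangeInf
  set ℐ := ↥((fun d : GISElem src rng => d.1.1.range) '' T) with hIdef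
  have hchoice : ∀ β : ℐ, ∃ d : GISElem src rng, d ∈ T ∧ d.1.1.range = β.1 :=
    fun β => β.2
  choose dfun hdT hdr using hchoice
  have hcf : ∀ β : ℐ, ¬ HasCycleAt src rng β.1 := fun β => (hdr β) ▸ (hdT β).1
  have hr2 : ∀ β : ℐ, (dfun β).1.2.range = β.1 := fun β => ((dfun β).2.symm).trans (hdr β)
  set Wf : ℐ → S := fun β => ι (oe (vertEl src rng β.1)) with hWf
  set Cf : ℐ → S := fun β => ι (oe (colEl (dfun β).1.1)) with hCf
  set Rf : ℐ → S := fun β => ι (oe (rowEl (dfun β).1.2)) with hRf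
  have hWinj : Function.Injective Wf := fun β γ h =>
    Subtype.ext (congrArg (fun e : GISElem src rng => e.1.1.start) (oe_inj (hinj h)))
  have hCinj : Function.Injective Cf := by
    intro β γ h
    apply Subtype.ext
    have h0 : colEl (dfun β).1.1 = colEl (dfun γ).1.1 := oe_inj (hinj h)
    have h1' := congrArg (fun e : GISElem src rng => e.1.1) h0
    have h1 : (dfun β).1.1 = (dfun γ).1.1 := h1'
    rw [← hdr β, ← hdr γ, h1]
  have hRinj : Function.Injective Rf := by
    intro β γ h
    apply Subtype.ext
    have h0 : rowEl (dfun β).1.2 = rowEl (dfun γ).1.2 := oe_inj (hinj h)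
    have h1' := congrArg (fun e : GISElem src rng => e.1.2) h0
    have h1 : (dfun β).1.2 = (dfun γ).1.2 := h1'
    rw [← hr2 β, ← hr2 γ, h1]
  have hconcW : ∀ W' : Set S, IsOpen W' → ι 0 ∈ W' → {β : ℐ | Wf β ∉ W'}.Finite := by
    refine conc_of_orth_idem hCLP hSmul Wf hWinj
      (fun β => iso_vert hSmul hinj hhom hdense (hcf β)) ?_ ?_
    · intro β
      exact S_mul hhom (vert_mul_vert _)
    · intro β γ hne
      exact S_mul_zero hhom (vert_mul_vert_zero (fun h => hne (Subtype.ext h)))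
  have hconcR : ∀ W' : Set S, IsOpen W' → ι 0 ∈ W' → {β : ℐ | Rf β ∉ W'}.Finite := by
    refine conc_push_left hCLP hSmul hhom hdense Wf Rf hconcW hRinj
      (fun β => iso_row hSmul hinj hhom hdense (hcf β) (hr2 β)) ?_
    intro β
    exact S_mul hhom (vert_mul (hr2 β))
  have hconcC : ∀ W' : Set S, IsOpen W' → ι 0 ∈ W' → {β : ℐ | Cf β ∉ W'}.Finite := by
    refine conc_push_right hCLP hSmul hhom hdense Wf Cf hconcW hCinj
      (fun β => iso_col hSmul hinj hhom hdense (hcf β) (hdr β)) ?_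
    intro β
    exact S_mul hhom (mul_vert (hdr β))
  -- final contradiction
  have hWnb : W ∈ 𝓝 (ι (0 : GIS src rng) * ι (0 : GIS src rng)) := by
    rw [zero_mul_S hSmul hhom hdense]
    exact hW.mem_nhds hzW
  obtain ⟨U, hU, Vv, hV, hbox⟩ := nhds_box hSmul hWnb
  obtain ⟨U', hU'sub, hU'open, hzU'⟩ := mem_nhds_iff.mp hU
  obtain ⟨V', hV'sub, hV'open, hzV'⟩ := mem_nhds_iff.mp hV
  have hbadfin : ({β : ℐ | Cf β ∉ U'} ∪ {β : ℐ | Rf β ∉ V'}).Finite :=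
    (hconcC U' hU'open hzU').union (hconcR V' hV'open hzV')
  obtain ⟨β, hβ⟩ := hbadfin.infinite_compl.nonempty
  simp only [Set.mem_compl_iff, Set.mem_union, Set.mem_setOf_eq, not_or, not_not] at hβ
  have hprod : Cf β * Rf β ∈ W := hbox _ (hU'sub hβ.1) _ (hV'sub hβ.2)
  apply (hdT β).2
  have hmul : oe (colEl (dfun β).1.1) * oe (rowEl (dfun β).1.2) = oe (dfun β) := by
    rw [col_mul_row (dfun β).2]
    exact congrArg oe (elem_ext rfl rfl)
  have := S_mul (ι := ι) hhom hmul
  rw [← this]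
  exact hprod
end Topology
end GISAux

open GISPaper in
/-- Let a graph inverse semigroup `G(E)` be a dense subsemigroup of a
Hausdorff CLP-compact topological semigroup `S`. Then for every vertex `f` through
which no cycle passes the set `I_f = {u ∈ Path(E) : r(u) = f}` is finite; moreover,
the set `{uv⁻¹ ∈ G(E) : no cycle passes through r(u)} ∪ {0}` is compact in `S`. -/
theorem statement7 {V E : Type*} (src rng : E → V)
    {S : Type*} [TopologicalSpace S] [T2Space S] [Mul S]
    (hassoc : ∀ a b c : S, a * b * c = a * (b * c))
    (hSmul : Continuous (fun p : S × S => p.1 * p.2))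
    (hCLP : CLPCompact S)
    (ι : GIS src rng → S) (hinj : Function.Injective ι)
    (hhom : ∀ x y : GIS src rng, ι (x * y) = ι x * ι y)
    (hdense : DenseRange ι) :
    (∀ f : V, ¬ HasCycleAt src rng f → {u : GPath src rng | u.range = f}.Finite) ∧
    IsCompact (ι '' ({0} ∪ {x : GIS src rng | ∃ p : GISElem src rng,
      x = some p ∧ ¬ HasCycleAt src rng p.1.1.range})) := by
  classical
  constructor
  · intro f hf
    exact GISAux.part1 hSmul hCLP hinj hhom hdense f hf
  · apply isCompact_of_finite_subcover
    intro idx U hUopen hcover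
    have hz : ι 0 ∈ ι '' ({0} ∪ {x : GIS src rng | ∃ p : GISElem src rng,
        x = some p ∧ ¬ HasCycleAt src rng p.1.1.range}) := ⟨0, Or.inl rfl, rfl⟩
    obtain ⟨i₀, hi₀⟩ := Set.mem_iUnion.mp (hcover hz)
    have hfin := GISAux.part2gamma hSmul hCLP hinj hhom hdense (hUopen i₀) hi₀
    set pick : GISElem src rng → idx := fun d =>
      if h : ∃ i, ι (GISAux.oe d) ∈ U i then h.choose else i₀ with hpickdef
    refine ⟨insert i₀ (hfin.toFinset.image pick), ?_⟩
    rintro x ⟨g, hg, rfl⟩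
    rcases hg with hg0 | hgD
    · have : g = 0 := hg0
      rw [this]
      exact Set.mem_biUnion (Finset.mem_insert_self _ _) hi₀
    · obtain ⟨p, rfl, hp⟩ := hgD
      by_cases hw : ι (some p) ∈ U i₀
      · exact Set.mem_biUnion (Finset.mem_insert_self _ _) hw
      · have hpT : p ∈ {d : GISElem src rng |
            ¬ HasCycleAt src rng d.1.1.range ∧ ι (GISAux.oe d) ∉ U i₀} := ⟨hp, hw⟩
        have hex : ∃ i, ι (GISAux.oe p) ∈ U i := by
          have hmem : ι (some p) ∈ ι '' ({0} ∪ {x : GIS src rng | ∃ q : GISElem src rng,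
              x = some q ∧ ¬ HasCycleAt src rng q.1.1.range}) :=
            ⟨some p, Or.inr ⟨p, rfl, hp⟩, rfl⟩
          exact Set.mem_iUnion.mp (hcover hmem)
        have hin : ι (GISAux.oe p) ∈ U (pick p) := by
          rw [hpickdef]
          simp only [dif_pos hex]
          exact hex.choose_spec
        refine Set.mem_biUnion ?_ hin
        exact Finset.mem_insert_of_mem (Finset.mem_image_of_mem pick (hfin.mem_toFinset.mpr hpT))
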